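/- With the ICW exchangeable pair construction, (1/λ)·E[|E[ |(X_n − X'_n) + c·σ²·(X̃_n − X̃'_n)|·(X_n − X'_n) | F_n]|] ≤ 2·E[|R̄_3 + R̄_4 + R̄_5 + Ř_3 + Ř_4 + Ř_5|], where R̄_3 := (1/χ_n)·(1/n)∑_i (tanh(t_i*) − tanh((β w_i/E[W_n])·m̃_n^i + h)), R̄_4 := (1/χ_n)·(1/n)∑_i (E_{μ_n}[σ_i] − tanh(t_i*)), R̄_5 := (1/χ_n)·(1/n)∑_i (σ_i − E_{μ_n}[σ_i]), Ř_3 := (c·σ²/√(χ_n·χ̃_n))·(1/n)∑_i w_i·(tanh(t_i*) − tanh((β w_i/E[W_n])·m̃_n^i + h)), Ř_4 := (c·σ²/√(χ_n·χ̃_n))·(1/n)∑_i w_i·(E_{μ_n}[σ_i] − tanh(t_i*)), Ř_5 := (c·σ²/√(χ_n·χ̃_n))·(1/n)∑_i w_i·(σ_i − E_{μ_n}[σ_i]). -/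

import Mathlib

open Real BigOperators Finset MeasureTheory Filter ProbabilityTheory Topology

noncomputable section

namespace ICW

/-- The real spin value associated to a Boolean: `true ↦ 1`, `false ↦ -1`. -/
def spin (b : Bool) : ℝ := if b then 1 else -1

/-- `E[W_n^k] = (1/n) ∑_i w_i^k`. -/
def EWk (n : ℕ) (w : Fin n → ℝ) (k : ℕ) : ℝ := (1 / n : ℝ) * ∑ i, (w i) ^ k

/-- `E[W_n] = (1/n) ∑_i w_i`. -/
def EW (n : ℕ) (w : Fin n → ℝ) : ℝ := (1 / n : ℝ) * ∑ i, w i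

/-- The (negative) Hamiltonian of the inhomogeneous Curie–Weiss model. -/
def ham (n : ℕ) (w : Fin n → ℝ) (β h : ℝ) (σ : Fin n → Bool) : ℝ :=
  β / (2 * ∑ i, w i) * (∑ i, w i * spin (σ i)) ^ 2 + h * ∑ i, spin (σ i)

/-- Unnormalized Boltzmann–Gibbs weight. -/
def wt (n : ℕ) (w : Fin n → ℝ) (β h : ℝ) (σ : Fin n → Bool) : ℝ :=
  Real.exp (ham n w β h σ)

/-- Partition function `Z_n`. -/
def Z (n : ℕ) (w : Fin n → ℝ) (β h : ℝ) : ℝ := ∑ σ : Fin n → Bool, wt n w β h σ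

/-- Expectation under the ICW measure `μ_n`. -/
def icwE (n : ℕ) (w : Fin n → ℝ) (β h : ℝ) (f : (Fin n → Bool) → ℝ) : ℝ :=
  (∑ σ : Fin n → Bool, wt n w β h σ * f σ) / Z n w β h

open Classical in
/-- Probability of an event under the ICW measure `μ_n`. -/
def icwP (n : ℕ) (w : Fin n → ℝ) (β h : ℝ) (A : (Fin n → Bool) → Prop) : ℝ :=
  icwE n w β h (fun σ => if A σ then 1 else 0)

/-- Magnetization `m_n`. -/
def mn (n : ℕ) (σ : Fin n → Bool) : ℝ := (1 / n : ℝ) * ∑ i, spin (σ i)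

/-- Weighted magnetization `m̃_n`. -/
def mtil (n : ℕ) (w : Fin n → ℝ) (σ : Fin n → Bool) : ℝ :=
  (1 / n : ℝ) * ∑ i, w i * spin (σ i)

/-- Weighted magnetization leaving out spin `i`, `m̃_n^i`. -/
def mtilI (n : ℕ) (w : Fin n → ℝ) (σ : Fin n → Bool) (i : Fin n) : ℝ :=
  (1 / n : ℝ) * ∑ j ∈ Finset.univ.erase i, w j * spin (σ j)

/-- Argument `√(β/E[W_n])·w_i·x + h`. -/
def arg (n : ℕ) (w : Fin n → ℝ) (β h x : ℝ) (i : Fin n) : ℝ :=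
  Real.sqrt (β / EW n w) * w i * x + h

/-- `G_n(x)`. -/
def Gfun (n : ℕ) (w : Fin n → ℝ) (β h : ℝ) (x : ℝ) : ℝ :=
  x ^ 2 / 2 - (1 / n : ℝ) * ∑ i, Real.log (Real.cosh (arg n w β h x i))

/-- `G_n(x; s)` (with tilted argument `x+s`). -/
def GfunS (n : ℕ) (w : Fin n → ℝ) (β h : ℝ) (x s : ℝ) : ℝ :=
  x ^ 2 / 2 - (1 / n : ℝ) * ∑ i, Real.log (Real.cosh (arg n w β h (x + s) i))

/-- `G_n'(x)`. -/
def Gfun' (n : ℕ) (w : Fin n → ℝ) (β h : ℝ) (x : ℝ) : ℝ :=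
  x - (1 / n : ℝ) * ∑ i, Real.sqrt (β / EW n w) * w i * Real.tanh (arg n w β h x i)

/-- `G_n''(x)`. -/
def Gfun'' (n : ℕ) (w : Fin n → ℝ) (β h : ℝ) (x : ℝ) : ℝ :=
  1 - β / EW n w * ((1 / n : ℝ) * ∑ i, (1 - Real.tanh (arg n w β h x i) ^ 2) * (w i) ^ 2)

/-- `x` has the same sign as `h` (and is `0` when `h = 0`). -/
def SameSign (h x : ℝ) : Prop :=
  (0 < h ∧ 0 < x) ∨ (h < 0 ∧ x < 0) ∨ (h = 0 ∧ x = 0)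

/-- `M_n`, defined from a solution `x` of the fixed point equation. -/
def Mn (n : ℕ) (w : Fin n → ℝ) (β h x : ℝ) : ℝ :=
  (1 / n : ℝ) * ∑ i, Real.tanh (arg n w β h x i)

/-- The susceptibility `χ_n`, defined from a solution `x` of the fixed point equation. -/
def chiN (n : ℕ) (w : Fin n → ℝ) (β h x : ℝ) : ℝ :=
  1 - (1 / n : ℝ) * ∑ i, Real.tanh (arg n w β h x i) ^ 2
    + β / EW n w * ((1 / n : ℝ) * ∑ i, (1 - Real.tanh (arg n w β h x i) ^ 2) * w i) ^ 2
      / Gfun'' n w β h x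

/-- `M̃_n`. -/
def Mtil (n : ℕ) (w : Fin n → ℝ) (β x : ℝ) : ℝ := Real.sqrt (EW n w / β) * x

/-- `χ̃_n`. -/
def chiTil (n : ℕ) (w : Fin n → ℝ) (β h x : ℝ) : ℝ :=
  ((1 / n : ℝ) * ∑ i, (1 - Real.tanh (arg n w β h x i) ^ 2) * (w i) ^ 2) / Gfun'' n w β h x

/-- The normalized magnetization `X_n` (as a function of the configuration),
where `x` is the relevant solution of the fixed point equation. -/
def Xn (n : ℕ) (w : Fin n → ℝ) (β h x : ℝ) (σ : Fin n → Bool) : ℝ :=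
  Real.sqrt n * (mn n σ - Mn n w β h x) / Real.sqrt (chiN n w β h x)

/-- The normalized weighted magnetization `X̃_n`. -/
def Xtil (n : ℕ) (w : Fin n → ℝ) (β h x : ℝ) (σ : Fin n → Bool) : ℝ :=
  Real.sqrt n * (mtil n w σ - Mtil n w β x) / Real.sqrt (chiTil n w β h x)

/-- The standard normal cumulative distribution function. -/
def stdGaussCDF (z : ℝ) : ℝ := ((gaussianReal 0 1) (Set.Iic z)).toReal

/-- Kolmogorov distance between the law of `X` under `μ_n` and the standard normal law. -/
def dK (n : ℕ) (w : Fin n → ℝ) (β h : ℝ) (X : (Fin n → Bool) → ℝ) : ℝ :=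
  ⨆ z : ℝ, |icwP n w β h (fun σ => X σ ≤ z) - stdGaussCDF z|

/-- Weight regularity condition (i): the empirical weight distribution converges weakly to
the law `ν` of `W`, which is a probability measure with `E[W] > 0`. -/
def WeightRegI (w : (n : ℕ) → Fin n → ℝ) (ν : Measure ℝ) : Prop :=
  (∀ n i, 0 < w n i) ∧ IsProbabilityMeasure ν ∧
    (∀ f : BoundedContinuousFunction ℝ ℝ,
      Tendsto (fun n : ℕ => (1 / n : ℝ) * ∑ i, f (w n i)) atTop (𝓝 (∫ x, f x ∂ν))) ∧
    Integrable (fun x => x) ν ∧ 0 < ∫ x, x ∂ν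

/-- Weight regularity condition (ii): `E[W_n²] → E[W²] < ∞`. -/
def WeightRegII (w : (n : ℕ) → Fin n → ℝ) (ν : Measure ℝ) : Prop :=
  Integrable (fun x => x ^ 2) ν ∧
    Tendsto (fun n => EWk n (w n) 2) atTop (𝓝 (∫ x, x ^ 2 ∂ν))

/-- Weight regularity condition (iii): `E[W_n³] → E[W³] < ∞`. -/
def WeightRegIII (w : (n : ℕ) → Fin n → ℝ) (ν : Measure ℝ) : Prop :=
  Integrable (fun x => x ^ 3) ν ∧
    Tendsto (fun n => EWk n (w n) 3) atTop (𝓝 (∫ x, x ^ 3 ∂ν))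

/-- The critical inverse temperature `β_c = E[W]/E[W²]`. -/
def betaC (ν : Measure ℝ) : ℝ := (∫ x, x ∂ν) / (∫ x, x ^ 2 ∂ν)

/-- The uniqueness regime `U`. -/
def Uniq (ν : Measure ℝ) (β h : ℝ) : Prop :=
  (0 ≤ β ∧ h ≠ 0) ∨ (0 < β ∧ β < betaC ν ∧ h = 0)

/-- Probability that spin `i` equals `+1` given the remaining spins. -/
def pPlus (n : ℕ) (w : Fin n → ℝ) (β h : ℝ) (σ : Fin n → Bool) (i : Fin n) : ℝ :=
  wt n w β h (Function.update σ i true) /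
    (wt n w β h (Function.update σ i true) + wt n w β h (Function.update σ i false))

/-- Conditional expectation given `F_n` (the σ-algebra generated by `σ`) of a function of
`(σ, I, σ'_I)`, where `I` is uniform on `[n]` and `σ'_I` is resampled from the conditional
distribution of the `I`-th spin given the others. -/
def condAvg (n : ℕ) (w : Fin n → ℝ) (β h : ℝ)
    (f : (Fin n → Bool) → Fin n → Bool → ℝ) (σ : Fin n → Bool) : ℝ :=
  (1 / n : ℝ) * ∑ i, (pPlus n w β h σ i * f σ i true + (1 - pPlus n w β h σ i) * f σ i false)

/-- The increment `X_n − X'_n` as a function of `(σ, I, σ'_I)`. -/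
def XnD (n : ℕ) (w : Fin n → ℝ) (β h x : ℝ) (σ : Fin n → Bool) (i : Fin n) (b : Bool) : ℝ :=
  (spin (σ i) - spin b) / (Real.sqrt n * Real.sqrt (chiN n w β h x))

/-- The increment `X̃_n − X̃'_n` as a function of `(σ, I, σ'_I)`. -/
def XtilD (n : ℕ) (w : Fin n → ℝ) (β h x : ℝ) (σ : Fin n → Bool) (i : Fin n) (b : Bool) : ℝ :=
  w i * (spin (σ i) - spin b) / (Real.sqrt n * Real.sqrt (chiTil n w β h x))

/-- The constant `c` in the regression equation. -/
def cconst (n : ℕ) (w : Fin n → ℝ) (β h x : ℝ) : ℝ :=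
  Real.sqrt (chiTil n w β h x) / Real.sqrt (chiN n w β h x) * (β / EW n w) *
    ((1 / n : ℝ) * ∑ i, (1 - Real.tanh (arg n w β h x i) ^ 2) * w i)

end ICW

namespace ICW

/-- Error term `R̄_3`. -/
def Rbar3 (n : ℕ) (w : Fin n → ℝ) (β h x : ℝ) (σ : Fin n → Bool) : ℝ :=
  1 / chiN n w β h x * ((1 / n : ℝ) * ∑ i,
    (Real.tanh (arg n w β h x i) - Real.tanh (β * w i / EW n w * mtilI n w σ i + h)))

/-- Error term `R̄_4`. -/
def Rbar4 (n : ℕ) (w : Fin n → ℝ) (β h x : ℝ) : ℝ :=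
  1 / chiN n w β h x * ((1 / n : ℝ) * ∑ i,
    (icwE n w β h (fun τ => spin (τ i)) - Real.tanh (arg n w β h x i)))

/-- Error term `R̄_5`. -/
def Rbar5 (n : ℕ) (w : Fin n → ℝ) (β h x : ℝ) (σ : Fin n → Bool) : ℝ :=
  1 / chiN n w β h x * ((1 / n : ℝ) * ∑ i,
    (spin (σ i) - icwE n w β h (fun τ => spin (τ i))))

/-- Error term `Ř_3`. -/
def Rchk3 (n : ℕ) (w : Fin n → ℝ) (β h x : ℝ) (σ : Fin n → Bool) : ℝ :=
  cconst n w β h x * (1 / Gfun'' n w β h x) / Real.sqrt (chiN n w β h x * chiTil n w β h x) *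
    ((1 / n : ℝ) * ∑ i, w i *
      (Real.tanh (arg n w β h x i) - Real.tanh (β * w i / EW n w * mtilI n w σ i + h)))

/-- Error term `Ř_4`. -/
def Rchk4 (n : ℕ) (w : Fin n → ℝ) (β h x : ℝ) : ℝ :=
  cconst n w β h x * (1 / Gfun'' n w β h x) / Real.sqrt (chiN n w β h x * chiTil n w β h x) *
    ((1 / n : ℝ) * ∑ i, w i *
      (icwE n w β h (fun τ => spin (τ i)) - Real.tanh (arg n w β h x i)))

/-- Error term `Ř_5`. -/
def Rchk5 (n : ℕ) (w : Fin n → ℝ) (β h x : ℝ) (σ : Fin n → Bool) : ℝ :=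
  cconst n w β h x * (1 / Gfun'' n w β h x) / Real.sqrt (chiN n w β h x * chiTil n w β h x) *
    ((1 / n : ℝ) * ∑ i, w i *
      (spin (σ i) - icwE n w β h (fun τ => spin (τ i))))

/-! ### Auxiliary lemmas -/

lemma tanh_sq_lt_one' (y : ℝ) : Real.tanh y ^ 2 < 1 := by
  rw [Real.tanh_eq_sinh_div_cosh, div_pow, div_lt_one (by positivity)]
  rw [Real.cosh_sq]; linarith

lemma tanh_ratio (a b : ℝ) :
    2 * (Real.exp a / (Real.exp a + Real.exp b)) - 1 = Real.tanh ((a - b) / 2) := by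
  have e1 : Real.exp a = Real.exp ((a - b) / 2) * Real.exp ((a + b) / 2) := by
    rw [← Real.exp_add]; ring_nf
  have e2 : Real.exp b = Real.exp (-((a - b) / 2)) * Real.exp ((a + b) / 2) := by
    rw [← Real.exp_add]; ring_nf
  rw [Real.tanh_eq_sinh_div_cosh, Real.sinh_eq, Real.cosh_eq, e1, e2]
  have h1 := Real.exp_pos ((a - b) / 2)
  have h2 := Real.exp_pos (-((a - b) / 2))
  have h3 := Real.exp_pos ((a + b) / 2)
  field_simp
  ring

lemma sum_update (n : ℕ) (w : Fin n → ℝ) (σ : Fin n → Bool) (i : Fin n) (b : Bool) :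
    ∑ j, w j * spin (Function.update σ i b j)
      = w i * spin b + ∑ j ∈ Finset.univ.erase i, w j * spin (σ j) := by
  rw [← Finset.add_sum_erase _ (fun j => w j * spin (Function.update σ i b j))
    (Finset.mem_univ i)]
  congr 1
  · rw [Function.update_self]
  · exact Finset.sum_congr rfl fun j hj => by
      rw [Function.update_of_ne (Finset.ne_of_mem_erase hj)]

lemma sum_update' (n : ℕ) (σ : Fin n → Bool) (i : Fin n) (b : Bool) :
    ∑ j, spin (Function.update σ i b j)
      = spin b + ∑ j ∈ Finset.univ.erase i, spin (σ j) := by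
  rw [← Finset.add_sum_erase _ (fun j => spin (Function.update σ i b j))
    (Finset.mem_univ i)]
  congr 1
  · rw [Function.update_self]
  · exact Finset.sum_congr rfl fun j hj => by
      rw [Function.update_of_ne (Finset.ne_of_mem_erase hj)]

lemma pPlus_eq (n : ℕ) (hn : 0 < n) (w : Fin n → ℝ) (hw : ∀ i, 0 < w i)
    (β h : ℝ) (σ : Fin n → Bool) (i : Fin n) :
    2 * pPlus n w β h σ i - 1
      = Real.tanh (β * w i / EW n w * mtilI n w σ i + h) := by
  have hnR : (0:ℝ) < n := by exact_mod_cast hn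
  have hL : (0:ℝ) < ∑ j, w j :=
    Finset.sum_pos (fun j _ => hw j) (Finset.univ_nonempty_iff.mpr ⟨⟨0, hn⟩⟩)
  have hd : ham n w β h (Function.update σ i true) - ham n w β h (Function.update σ i false)
      = 2 * (β * w i / EW n w * mtilI n w σ i + h) := by
    unfold ham EW mtilI
    rw [sum_update, sum_update, sum_update', sum_update']
    simp only [spin, if_true, if_false, Bool.false_eq_true]
    field_simp
    ring
  unfold pPlus wt
  rw [tanh_ratio, hd]
  congr 1
  ring

lemma goal2_aux (nr χ χt K S1 S2 : ℝ) (hnr : 0 < nr) (hχ : 0 < χ) (hχt : 0 < χt) :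
    nr * ((1/nr) * (2 * (Real.sqrt nr * Real.sqrt χ)⁻¹ * (Real.sqrt nr * Real.sqrt χ)⁻¹ * S1
      + 2 * (Real.sqrt nr * Real.sqrt χ)⁻¹ * K * (Real.sqrt nr * Real.sqrt χt)⁻¹ * S2))
    = 2 * (1/χ * ((1/nr) * S1) + K / Real.sqrt (χ * χt) * ((1/nr) * S2)) := by
  rw [Real.sqrt_mul hχ.le]
  set sn := Real.sqrt nr with hsn'
  set sχ := Real.sqrt χ with hsχ'
  set sχt := Real.sqrt χt with hsχt'
  have hns : sn * sn = nr := Real.mul_self_sqrt hnr.le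
  have hχs : sχ * sχ = χ := Real.mul_self_sqrt hχ.le
  have hsn : (0:ℝ) < sn := Real.sqrt_pos.mpr hnr
  have hsχ : (0:ℝ) < sχ := Real.sqrt_pos.mpr hχ
  have hsχt : (0:ℝ) < sχt := Real.sqrt_pos.mpr hχt
  rw [← hns, ← hχs]
  field_simp

/-- **Bound on the second Stein term** for the ICW exchangeable pair, with `λ = 1/n` and
`σ² = 1/G_n''(x_n*)`; the conditional expectation given `F_n` is the average over the
uniformly chosen coordinate `I` and the resampled spin `σ'_I`. -/
theorem second_stein_term_bound (n : ℕ) (hn : 0 < n) (w : Fin n → ℝ) (hw : ∀ i, 0 < w i)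
    (β h : ℝ) (hβ : 0 < β) (x : ℝ) (hx : Gfun' n w β h x = 0) (hsign : SameSign h x)
    (hG'' : 0 < Gfun'' n w β h x) :
    (n : ℝ) * icwE n w β h (fun σ => |condAvg n w β h (fun τ i b =>
        |XnD n w β h x τ i b + cconst n w β h x * (1 / Gfun'' n w β h x) *
          XtilD n w β h x τ i b| * XnD n w β h x τ i b) σ|)
      ≤ 2 * icwE n w β h (fun σ => |Rbar3 n w β h x σ + Rbar4 n w β h x + Rbar5 n w β h x σ
          + Rchk3 n w β h x σ + Rchk4 n w β h x + Rchk5 n w β h x σ|) := by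
  classical
  -- Abbreviations
  set F : (Fin n → Bool) → Fin n → Bool → ℝ := fun τ i b =>
    |XnD n w β h x τ i b + cconst n w β h x * (1 / Gfun'' n w β h x) *
      XtilD n w β h x τ i b| * XnD n w β h x τ i b with hF
  set χ := chiN n w β h x with hχdef
  set χt := chiTil n w β h x with hχtdef
  set K := cconst n w β h x * (1 / Gfun'' n w β h x) with hKdef
  have hnR : (0:ℝ) < n := by exact_mod_cast hn
  have hL : (0:ℝ) < ∑ j, w j :=
    Finset.sum_pos (fun j _ => hw j) (Finset.univ_nonempty_iff.mpr ⟨⟨0, hn⟩⟩)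
  have hEW : 0 < EW n w := by
    unfold EW; positivity
  have hne : (Finset.univ : Finset (Fin n)).Nonempty := ⟨⟨0, hn⟩, Finset.mem_univ _⟩
  -- χ > 0
  have hsq : ∀ i : Fin n, Real.tanh (arg n w β h x i) ^ 2 < 1 := fun i => tanh_sq_lt_one' _
  have hχ : 0 < χ := by
    rw [hχdef]
    unfold chiN
    have h1 : ∑ i, Real.tanh (arg n w β h x i) ^ 2 < ∑ _i : Fin n, (1:ℝ) :=
      Finset.sum_lt_sum_of_nonempty hne (fun i _ => hsq i)
    have h1' : (1 / n : ℝ) * ∑ i, Real.tanh (arg n w β h x i) ^ 2 < 1 := by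
      have hstep := mul_lt_mul_of_pos_left h1 (show (0:ℝ) < 1 / n by positivity)
      have hsum : (1 / n : ℝ) * ∑ _i : Fin n, (1:ℝ) = 1 := by
        simp [Finset.sum_const]
        field_simp
      linarith
    have h2 : 0 ≤ β / EW n w *
        ((1 / n : ℝ) * ∑ i, (1 - Real.tanh (arg n w β h x i) ^ 2) * w i) ^ 2
          / Gfun'' n w β h x :=
      div_nonneg (mul_nonneg (div_pos hβ hEW).le (sq_nonneg _)) hG''.le
    linarith
  -- χt > 0
  have hχt : 0 < χt := by
    rw [hχtdef]
    unfold chiTil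
    apply div_pos _ hG''
    have : 0 < ∑ i, (1 - Real.tanh (arg n w β h x i) ^ 2) * (w i) ^ 2 :=
      Finset.sum_pos (fun i _ => mul_pos (by linarith [hsq i]) (pow_pos (hw i) 2)) hne
    positivity
  -- K ≥ 0
  have hK : 0 ≤ K := by
    rw [hKdef]
    unfold cconst
    have hs : 0 ≤ (1 / n : ℝ) * ∑ i, (1 - Real.tanh (arg n w β h x i) ^ 2) * w i := by
      have : 0 ≤ ∑ i, (1 - Real.tanh (arg n w β h x i) ^ 2) * w i :=
        Finset.sum_nonneg fun i _ => mul_nonneg (by linarith [hsq i]) (hw i).le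
      positivity
    have h1 : 0 ≤ Real.sqrt (chiTil n w β h x) / Real.sqrt (chiN n w β h x) * (β / EW n w) :=
      mul_nonneg (div_nonneg (Real.sqrt_nonneg _) (Real.sqrt_nonneg _)) (div_pos hβ hEW).le
    exact mul_nonneg (mul_nonneg h1 hs) (by positivity)
  -- sqrt facts
  have hns : Real.sqrt n * Real.sqrt n = (n:ℝ) := Real.mul_self_sqrt hnR.le
  have hχs : Real.sqrt χ * Real.sqrt χ = χ := Real.mul_self_sqrt hχ.le
  have hmulsqrt : Real.sqrt (χ * χt) = Real.sqrt χ * Real.sqrt χt := Real.sqrt_mul hχ.le _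
  have hsχ : (0:ℝ) < Real.sqrt χ := Real.sqrt_pos.mpr hχ
  have hsχt : (0:ℝ) < Real.sqrt χt := Real.sqrt_pos.mpr hχt
  have hsn : (0:ℝ) < Real.sqrt n := Real.sqrt_pos.mpr hnR
  set A := (Real.sqrt n * Real.sqrt χ)⁻¹ with hAdef
  have hA : 0 ≤ A := by positivity
  -- pointwise identity per coordinate
  have hone : ∀ (σ : Fin n → Bool) (i : Fin n),
      pPlus n w β h σ i *
          (|XnD n w β h x σ i true + K * XtilD n w β h x σ i true| * XnD n w β h x σ i true)
        + (1 - pPlus n w β h σ i) *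
          (|XnD n w β h x σ i false + K * XtilD n w β h x σ i false| * XnD n w β h x σ i false)
        = 2 * (A + K * w i * (Real.sqrt n * Real.sqrt χt)⁻¹) * A *
            (spin (σ i) - Real.tanh (β * w i / EW n w * mtilI n w σ i + h)) := by
    intro σ i
    have hp := pPlus_eq n hn w hw β h σ i
    set B := K * w i * (Real.sqrt n * Real.sqrt χt)⁻¹ with hBdef
    have hAB : 0 ≤ A + B := by
      have : 0 ≤ B := by
        rw [hBdef]; exact mul_nonneg (mul_nonneg hK (hw i).le) (by positivity)
      linarith
    have hf : ∀ b : Bool, |XnD n w β h x σ i b + K * XtilD n w β h x σ i b|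
        * XnD n w β h x σ i b
        = |spin (σ i) - spin b| * (spin (σ i) - spin b) * (A + B) * A := by
      intro b
      have h1 : XnD n w β h x σ i b = (spin (σ i) - spin b) * A := by
        unfold XnD; rw [hAdef, div_eq_mul_inv]
      have h2 : K * XtilD n w β h x σ i b = (spin (σ i) - spin b) * B := by
        unfold XtilD; rw [hBdef, div_eq_mul_inv]; ring
      rw [h1, h2, show (spin (σ i) - spin b) * A + (spin (σ i) - spin b) * B
          = (spin (σ i) - spin b) * (A + B) from by ring,
        abs_mul, abs_of_nonneg hAB]
      ring
    rw [hf true, hf false, ← hp]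
    cases hsi : σ i <;> simp only [spin, if_true, if_false] <;> norm_num <;> ring
  -- the key pointwise identity
  have key : ∀ σ : Fin n → Bool,
      (n : ℝ) * condAvg n w β h F σ
        = 2 * (Rbar3 n w β h x σ + Rbar4 n w β h x + Rbar5 n w β h x σ
            + Rchk3 n w β h x σ + Rchk4 n w β h x + Rchk5 n w β h x σ) := by
    intro σ
    unfold condAvg
    simp only [hF]
    rw [Finset.sum_congr rfl (fun i _ => hone σ i)]
    have split : ∑ i, 2 * (A + K * w i * (Real.sqrt n * Real.sqrt χt)⁻¹) * A *
          (spin (σ i) - Real.tanh (β * w i / EW n w * mtilI n w σ i + h))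
        = 2 * A * A * (∑ i, (spin (σ i) - Real.tanh (β * w i / EW n w * mtilI n w σ i + h)))
          + 2 * A * K * (Real.sqrt n * Real.sqrt χt)⁻¹ *
            (∑ i, w i * (spin (σ i) - Real.tanh (β * w i / EW n w * mtilI n w σ i + h))) := by
      rw [Finset.mul_sum, Finset.mul_sum, ← Finset.sum_add_distrib]
      exact Finset.sum_congr rfl fun i _ => by ring
    rw [split]
    unfold Rbar3 Rbar4 Rbar5 Rchk3 Rchk4 Rchk5
    rw [← hχdef, ← hχtdef]
    have hsum1 : (1 / n : ℝ) * ∑ i,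
          (Real.tanh (arg n w β h x i) - Real.tanh (β * w i / EW n w * mtilI n w σ i + h))
        + (1 / n : ℝ) * ∑ i,
          (icwE n w β h (fun τ => spin (τ i)) - Real.tanh (arg n w β h x i))
        + (1 / n : ℝ) * ∑ i,
          (spin (σ i) - icwE n w β h (fun τ => spin (τ i)))
        = (1 / n : ℝ) * ∑ i,
          (spin (σ i) - Real.tanh (β * w i / EW n w * mtilI n w σ i + h)) := by
      rw [← mul_add, ← mul_add, ← Finset.sum_add_distrib, ← Finset.sum_add_distrib]
      congr 1
      exact Finset.sum_congr rfl fun i _ => by ring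
    have hsum2 : (1 / n : ℝ) * ∑ i, w i *
          (Real.tanh (arg n w β h x i) - Real.tanh (β * w i / EW n w * mtilI n w σ i + h))
        + (1 / n : ℝ) * ∑ i, w i *
          (icwE n w β h (fun τ => spin (τ i)) - Real.tanh (arg n w β h x i))
        + (1 / n : ℝ) * ∑ i, w i *
          (spin (σ i) - icwE n w β h (fun τ => spin (τ i)))
        = (1 / n : ℝ) * ∑ i, w i *
          (spin (σ i) - Real.tanh (β * w i / EW n w * mtilI n w σ i + h)) := by
      rw [← mul_add, ← mul_add, ← Finset.sum_add_distrib, ← Finset.sum_add_distrib]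
      congr 1
      exact Finset.sum_congr rfl fun i _ => by ring
    set S1 := ∑ i, (spin (σ i) - Real.tanh (β * w i / EW n w * mtilI n w σ i + h)) with hS1
    set S2 := ∑ i, w i * (spin (σ i) - Real.tanh (β * w i / EW n w * mtilI n w σ i + h))
      with hS2
    have goal2 : (n:ℝ) * ((1/n : ℝ) * (2 * A * A * S1
          + 2 * A * K * (Real.sqrt n * Real.sqrt χt)⁻¹ * S2))
        = 2 * (1 / χ * ((1/n : ℝ) * S1)
            + K / Real.sqrt (χ * χt) * ((1/n : ℝ) * S2)) := by
      rw [hAdef]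
      exact goal2_aux n χ χt K S1 S2 hnR hχ hχt
    calc (n:ℝ) * ((1/n : ℝ) * (2 * A * A * S1
          + 2 * A * K * (Real.sqrt n * Real.sqrt χt)⁻¹ * S2))
        = 2 * (1 / χ * ((1/n : ℝ) * S1) + K / Real.sqrt (χ * χt) * ((1/n : ℝ) * S2)) := goal2
      _ = _ := by
          rw [← hsum1, ← hsum2, hKdef]
          ring
  -- conclude
  have habslem : ∀ σ : Fin n → Bool,
      (n : ℝ) * |condAvg n w β h F σ|
        = 2 * |Rbar3 n w β h x σ + Rbar4 n w β h x + Rbar5 n w β h x σ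
            + Rchk3 n w β h x σ + Rchk4 n w β h x + Rchk5 n w β h x σ| := by
    intro σ
    have h1 : (n:ℝ) * |condAvg n w β h F σ| = |(n:ℝ) * condAvg n w β h F σ| := by
      rw [abs_mul, abs_of_nonneg hnR.le]
    rw [h1, key σ, abs_mul, abs_of_nonneg (by norm_num : (0:ℝ) ≤ 2)]
  apply le_of_eq
  unfold icwE
  rw [← mul_div_assoc, ← mul_div_assoc, Finset.mul_sum, Finset.mul_sum]
  congr 1
  refine Finset.sum_congr rfl fun σ _ => ?_
  rw [show (n:ℝ) * (wt n w β h σ * |condAvg n w β h F σ|)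
      = wt n w β h σ * ((n:ℝ) * |condAvg n w β h F σ|) from by ring, habslem σ]
  ring


end ICW
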